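/- arXiv:2407.15576 — 2 statements merged into one kernel-verified Lean document; each statement's English description precedes it below -/
import Mathlib

section
/- Let K > 0, m > 0, θ > 0 with Kθ² < mπ², and let λ = θ√(K/m). Let N : [0,1] → ℝ be twice differentiable with N''(t) ≤ -(Kθ²/m) N(t) for all t ∈ [0,1]. Then for all t ∈ [0,1], N(t) ≥ (sin((1-t)λ)/sin λ) N(0) + (sin(tλ)/sin λ) N(1). -/
open Set Real

theorem stmt_7 (K m θ : ℝ) (hK : 0 < K) (hm : 0 < m) (hθ : 0 < θ)
    (hbound : K * θ ^ 2 < m * π ^ 2) (lam : ℝ) (hlam : lam = θ * Real.sqrt (K / m))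
    (N N' N'' : ℝ → ℝ)
    (hN' : ∀ t ∈ Icc (0:ℝ) 1, HasDerivAt N (N' t) t)
    (hN'' : ∀ t ∈ Icc (0:ℝ) 1, HasDerivAt N' (N'' t) t)
    (hineq : ∀ t ∈ Icc (0:ℝ) 1, N'' t ≤ -(K * θ ^ 2 / m) * N t) :
    ∀ t ∈ Icc (0:ℝ) 1,
      (Real.sin ((1 - t) * lam) / Real.sin lam) * N 0 +
        (Real.sin (t * lam) / Real.sin lam) * N 1 ≤ N t := by
  have hlam_pos : 0 < lam := by
    rw [hlam]; exact mul_pos hθ (Real.sqrt_pos.mpr (div_pos hK hm))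
  have hsq : lam ^ 2 = K * θ ^ 2 / m := by
    rw [hlam, mul_pow, Real.sq_sqrt (div_nonneg hK.le hm.le)]; ring
  have hlam_lt : lam < π := by
    have h2 : lam ^ 2 < π ^ 2 := by
      rw [hsq, div_lt_iff₀ hm]; linarith
    exact lt_of_pow_lt_pow_left₀ 2 Real.pi_pos.le h2
  have hsin : 0 < Real.sin lam := Real.sin_pos_of_pos_of_lt_pi hlam_pos hlam_lt
  -- the comparison function
  set g : ℝ → ℝ := fun t =>
    Real.sin lam * N t - (Real.sin ((1 - t) * lam) * N 0 + Real.sin (t * lam) * N 1) with hg_def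
  set g' : ℝ → ℝ := fun t =>
    Real.sin lam * N' t -
      (Real.cos ((1 - t) * lam) * (-1 * lam) * N 0 + Real.cos (t * lam) * lam * N 1) with hg'_def
  set g'' : ℝ → ℝ := fun t =>
    Real.sin lam * N'' t -
      (-Real.sin ((1 - t) * lam) * (-1 * lam) * (-1 * lam) * N 0 +
        -Real.sin (t * lam) * lam * lam * N 1) with hg''_def
  have ha : ∀ t : ℝ, HasDerivAt (fun s : ℝ => (1 - s) * lam) (-1 * lam) t := fun t =>
    (((hasDerivAt_id t).const_sub 1).mul_const lam)
  have hb : ∀ t : ℝ, HasDerivAt (fun s : ℝ => s * lam) lam t := fun t =>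
    hasDerivAt_mul_const lam
  have hsin1 : ∀ t : ℝ, HasDerivAt (fun s : ℝ => Real.sin ((1 - s) * lam))
      (Real.cos ((1 - t) * lam) * (-1 * lam)) t := fun t =>
    (Real.hasDerivAt_sin _).comp t (ha t)
  have hsin2 : ∀ t : ℝ, HasDerivAt (fun s : ℝ => Real.sin (s * lam))
      (Real.cos (t * lam) * lam) t := fun t =>
    (Real.hasDerivAt_sin _).comp t (hb t)
  have hcos1 : ∀ t : ℝ, HasDerivAt (fun s : ℝ => Real.cos ((1 - s) * lam))
      (-Real.sin ((1 - t) * lam) * (-1 * lam)) t := fun t =>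
    (Real.hasDerivAt_cos _).comp t (ha t)
  have hcos2 : ∀ t : ℝ, HasDerivAt (fun s : ℝ => Real.cos (s * lam))
      (-Real.sin (t * lam) * lam) t := fun t =>
    (Real.hasDerivAt_cos _).comp t (hb t)
  have hg' : ∀ t ∈ Icc (0:ℝ) 1, HasDerivAt g (g' t) t := fun t ht =>
    ((hN' t ht).const_mul _).sub
      (((hsin1 t).mul_const (N 0)).add ((hsin2 t).mul_const (N 1)))
  have hg'' : ∀ t ∈ Icc (0:ℝ) 1, HasDerivAt g' (g'' t) t := fun t ht =>
    ((hN'' t ht).const_mul _).sub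
      ((((hcos1 t).mul_const (-1 * lam)).mul_const (N 0)).add
        (((hcos2 t).mul_const lam).mul_const (N 1)))
  have hkey : ∀ t ∈ Icc (0:ℝ) 1, g'' t + lam ^ 2 * g t ≤ 0 := by
    intro t ht
    have hid : g'' t + lam ^ 2 * g t = Real.sin lam * (N'' t + lam ^ 2 * N t) := by
      simp only [hg_def, hg''_def]; ring
    have h1 : N'' t + lam ^ 2 * N t ≤ 0 := by
      have := hineq t ht; rw [hsq]; linarith
    rw [hid]
    exact mul_nonpos_of_nonneg_of_nonpos hsin.le h1
  -- Wronskian-type function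
  set w : ℝ → ℝ := fun t => g' t * Real.sin (t * lam) - lam * (g t * Real.cos (t * lam))
    with hw_def
  have hw' : ∀ t ∈ Icc (0:ℝ) 1, HasDerivAt w ((g'' t + lam ^ 2 * g t) * Real.sin (t * lam)) t := by
    intro t ht
    have h := ((hg'' t ht).mul (hsin2 t)).sub
      (((hg' t ht).mul (hcos2 t)).const_mul lam)
    refine h.congr_deriv ?_
    ring
  have hsin_nonneg : ∀ t ∈ Icc (0:ℝ) 1, 0 ≤ Real.sin (t * lam) := by
    intro t ht
    apply Real.sin_nonneg_of_nonneg_of_le_pi (mul_nonneg ht.1 hlam_pos.le)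
    calc t * lam ≤ 1 * lam := mul_le_mul_of_nonneg_right ht.2 hlam_pos.le
    _ ≤ π := by rw [one_mul]; exact hlam_lt.le
  have hw_anti : AntitoneOn w (Icc (0:ℝ) 1) := by
    apply antitoneOn_of_hasDerivWithinAt_nonpos (convex_Icc 0 1)
      (fun t ht => (hw' t ht).continuousAt.continuousWithinAt)
      (fun t ht => ((hw' t (interior_subset ht)).hasDerivWithinAt))
    intro t ht
    have ht' : t ∈ Icc (0:ℝ) 1 := interior_subset ht
    exact mul_nonpos_of_nonpos_of_nonneg (hkey t ht') (hsin_nonneg t ht')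
  have hg0 : g 0 = 0 := by simp [hg_def]
  have hg1 : g 1 = 0 := by simp [hg_def]
  have hw_le : ∀ t ∈ Icc (0:ℝ) 1, w t ≤ 0 := by
    intro t ht
    have h0 : w 0 = 0 := by simp [hw_def, hg0]
    have := hw_anti (left_mem_Icc.mpr zero_le_one) ht ht.1
    rw [h0] at this; exact this
  -- the ratio function
  set φ : ℝ → ℝ := fun t => g t / Real.sin (t * lam) with hφ_def
  have hsin_pos : ∀ t ∈ Ioc (0:ℝ) 1, 0 < Real.sin (t * lam) := by
    intro t ht
    apply Real.sin_pos_of_pos_of_lt_pi (mul_pos ht.1 hlam_pos)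
    calc t * lam ≤ 1 * lam := mul_le_mul_of_nonneg_right ht.2 hlam_pos.le
    _ < π := by rw [one_mul]; exact hlam_lt
  have hφ_anti : AntitoneOn φ (Ioc (0:ℝ) 1) := by
    have hioc : Ioc (0:ℝ) 1 ⊆ Icc 0 1 := Ioc_subset_Icc_self
    have hint : interior (Ioc (0:ℝ) 1) = Ioo 0 1 := interior_Ioc
    apply antitoneOn_of_hasDerivWithinAt_nonpos (convex_Ioc 0 1)
      (fun t ht => ContinuousWithinAt.div
        (hg' t (hioc ht)).continuousAt.continuousWithinAt
        ((Real.continuous_sin.comp (continuous_id.mul continuous_const)).continuousWithinAt)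
        (hsin_pos t ht).ne')
      (f' := fun t => w t / Real.sin (t * lam) ^ 2)
    · intro t ht
      rw [hint] at ht
      have ht' : t ∈ Ioc (0:ℝ) 1 := Ioo_subset_Ioc_self ht
      have hne : Real.sin (t * lam) ≠ 0 := (hsin_pos t ht').ne'
      have h := (hg' t (Ioc_subset_Icc_self ht')).div (hsin2 t) hne
      have : HasDerivAt φ (w t / Real.sin (t * lam) ^ 2) t := by
        refine h.congr_deriv ?_
        simp only [hw_def]
        ring
      exact this.hasDerivWithinAt
    · intro t ht
      rw [hint] at ht
      have ht' : t ∈ Ioc (0:ℝ) 1 := Ioo_subset_Ioc_self ht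
      exact div_nonpos_of_nonpos_of_nonneg (hw_le t (Ioc_subset_Icc_self ht')) (sq_nonneg _)
  have hφ1 : φ 1 = 0 := by simp [hφ_def, hg1]
  have hg_nonneg : ∀ t ∈ Icc (0:ℝ) 1, 0 ≤ g t := by
    intro t ht
    rcases eq_or_lt_of_le ht.1 with h0 | h0
    · rw [← h0, hg0]
    · have htm : t ∈ Ioc (0:ℝ) 1 := ⟨h0, ht.2⟩
      have := hφ_anti htm (right_mem_Ioc.mpr zero_lt_one) htm.2
      rw [hφ1] at this
      have hs := hsin_pos t htm
      have h2 : 0 ≤ g t / Real.sin (t * lam) := this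
      have := mul_nonneg h2 hs.le
      rwa [div_mul_cancel₀ _ hs.ne'] at this
  intro t ht
  have hgt := hg_nonneg t ht
  rw [div_mul_eq_mul_div, div_mul_eq_mul_div, ← add_div, div_le_iff₀ hsin]
  simp only [hg_def] at hgt
  nlinarith [hgt]
end

section
/- Let m > 0, K ∈ ℝ, θ ≥ 0, and suppose H : (0,∞) → ℝ is twice differentiable and satisfies H''(t) + H'(t)²/m + Kθ² ≤ 0 for all t > 0. With W(t) = d/dt ( t (H(t) - (m/2)(1 + log(4πt²))) ), it follows that (1/t) W'(t) ≤ -Kθ² - (1/m)(H'(t) - m/t)² for all t > 0. In particular, if K ≥ 0 then W is nonincreasing on (0,∞). -/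
open Set Real

theorem stmt_19 (m K θ : ℝ) (hm : 0 < m) (hθ : 0 ≤ θ) (H H' H'' : ℝ → ℝ)
    (hH' : ∀ t ∈ Ioi (0:ℝ), HasDerivAt H (H' t) t)
    (hH'' : ∀ t ∈ Ioi (0:ℝ), HasDerivAt H' (H'' t) t)
    (hEDI : ∀ t ∈ Ioi (0:ℝ), H'' t + (H' t) ^ 2 / m + K * θ ^ 2 ≤ 0)
    (W : ℝ → ℝ)
    (hW : W = fun t => deriv
      (fun s => s * (H s - (m / 2) * (1 + Real.log (4 * π * s ^ 2)))) t) :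
    (∀ t ∈ Ioi (0:ℝ),
      (1 / t) * deriv W t ≤ -(K * θ ^ 2) - (1 / m) * (H' t - m / t) ^ 2) ∧
    (0 ≤ K → AntitoneOn W (Ioi 0)) := by
  have hπ : (0:ℝ) < π := Real.pi_pos
  -- derivative of the log term
  have hlog : ∀ t ∈ Ioi (0:ℝ),
      HasDerivAt (fun s : ℝ => Real.log (4 * π * s ^ 2)) (2 / t) t := by
    intro t ht
    have ht0 : (0:ℝ) < t := ht
    have h1 : HasDerivAt (fun s : ℝ => 4 * π * s ^ 2) (4 * π * (2 * t)) t := by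
      have := (hasDerivAt_pow 2 t).const_mul (4 * π)
      simpa using this
    have hne : 4 * π * t ^ 2 ≠ 0 := by positivity
    have := h1.log hne
    convert this using 1
    field_simp
  -- W agrees on Ioi 0 with an explicit function g
  set g : ℝ → ℝ := fun t => H t + t * H' t - m - (m / 2) * (1 + Real.log (4 * π * t ^ 2))
    with hg
  have hfd : ∀ t ∈ Ioi (0:ℝ),
      HasDerivAt (fun s => s * (H s - (m / 2) * (1 + Real.log (4 * π * s ^ 2))))
        (g t) t := by
    intro t ht
    have ht0 : (0:ℝ) < t := ht
    have hinner : HasDerivAt (fun s => H s - (m / 2) * (1 + Real.log (4 * π * s ^ 2)))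
        (H' t - (m / 2) * (2 / t)) t := by
      exact (hH' t ht).sub (((hlog t ht).const_add 1).const_mul (m / 2))
    have : HasDerivAt (fun s => s * (H s - (m / 2) * (1 + Real.log (4 * π * s ^ 2))))
        (1 * (H t - (m / 2) * (1 + Real.log (4 * π * t ^ 2))) + id t * (H' t - (m / 2) * (2 / t))) t :=
      (hasDerivAt_id t).mul hinner
    convert this using 1
    simp only [hg, id]
    field_simp
    ring
  have hWg : ∀ t ∈ Ioi (0:ℝ), W t = g t := by
    intro t ht
    rw [hW]
    exact (hfd t ht).deriv
  have hWeq : ∀ t ∈ Ioi (0:ℝ), W =ᶠ[nhds t] g := by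
    intro t ht
    filter_upwards [isOpen_Ioi.mem_nhds ht] with s hs using hWg s hs
  -- derivative of W on Ioi 0
  have hWd : ∀ t ∈ Ioi (0:ℝ),
      HasDerivAt W (2 * H' t + t * H'' t - m / t) t := by
    intro t ht
    have ht0 : (0:ℝ) < t := ht
    have hgd : HasDerivAt g (2 * H' t + t * H'' t - m / t) t := by
      have h1 : HasDerivAt (fun s => H s + s * H' s - m)
          (H' t + (1 * H' t + t * H'' t)) t :=
        ((hH' t ht).add ((hasDerivAt_id t).mul (hH'' t ht))).sub_const m
      have h2 : HasDerivAt g (H' t + (1 * H' t + t * H'' t) - m / 2 * (2 / t)) t := h1.sub (((hlog t ht).const_add 1).const_mul (m / 2))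
      convert h2 using 1
      field_simp
      ring
    exact hgd.congr_of_eventuallyEq (hWeq t ht)
  have hderiv : ∀ t ∈ Ioi (0:ℝ), deriv W t = 2 * H' t + t * H'' t - m / t := by
    intro t ht
    exact (hWd t ht).deriv
  have key : ∀ t ∈ Ioi (0:ℝ),
      (1 / t) * deriv W t ≤ -(K * θ ^ 2) - (1 / m) * (H' t - m / t) ^ 2 := by
    intro t ht
    have ht0 : (0:ℝ) < t := ht
    rw [hderiv t ht]
    have hE := hEDI t ht
    have hEq : -(K * θ ^ 2) - (1 / m) * (H' t - m / t) ^ 2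
        = (-(K * θ ^ 2) - (H' t) ^ 2 / m) + 2 * H' t / t - m / t ^ 2 := by
      field_simp
      ring
    rw [hEq]
    have hL : (1 / t) * (2 * H' t + t * H'' t - m / t)
        = H'' t + 2 * H' t / t - m / t ^ 2 := by
      field_simp
      ring
    rw [hL]
    have : H'' t ≤ -(K * θ ^ 2) - (H' t) ^ 2 / m := by linarith
    linarith
  refine ⟨key, fun hK => ?_⟩
  apply antitoneOn_of_deriv_nonpos (convex_Ioi 0)
  · intro t ht
    exact ((hWd t ht).continuousAt).continuousWithinAt
  · intro t ht
    rw [interior_Ioi] at ht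
    exact ((hWd t ht).differentiableAt).differentiableWithinAt
  · intro t ht
    rw [interior_Ioi] at ht
    have ht0 : (0:ℝ) < t := ht
    have h1 := key t ht
    have h2 : -(K * θ ^ 2) - (1 / m) * (H' t - m / t) ^ 2 ≤ 0 := by
      have : 0 ≤ K * θ ^ 2 := by positivity
      have : 0 ≤ (1 / m) * (H' t - m / t) ^ 2 := by positivity
      linarith
    have h3 : (1 / t) * deriv W t ≤ 0 := le_trans h1 h2
    calc deriv W t = t * ((1 / t) * deriv W t) := by field_simp
      _ ≤ t * 0 := mul_le_mul_of_nonneg_left h3 ht0.le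
      _ = 0 := mul_zero t
end
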